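/- Let d = 1, φ*(z) = √(1+z²) - 1, V ∈ C²(ℝ). Suppose Ω ⊂ ℝ is an open interval, w ∈ C²(Ω), V'' ≤ 0 (so div(∇φ*(V')) ≤ 0), Qw ≥ 0 in Ω where Qw = w''/(1+w'²)^{3/2} + w'²/√(1+w'²) + w'V'/√(1+V'²) + V''/(1+V'²)^{3/2}, and w attains an interior maximum at x₀ ∈ Ω. Then w is constant on Ω. -/

import Mathlib

open Real

/-- If `p' + h·p ≥ 0` on `[x₀, y]`, `h` continuous, and `p x₀ = 0`, then `p y ≥ 0`. -/
lemma aux_right {x₀ y : ℝ} {p p' h : ℝ → ℝ} (hxy : x₀ ≤ y)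
    (hp : ∀ x ∈ Set.Icc x₀ y, HasDerivAt p (p' x) x)
    (hh : ContinuousOn h (Set.Icc x₀ y))
    (hineq : ∀ x ∈ Set.Icc x₀ y, 0 ≤ p' x + h x * p x)
    (hp0 : p x₀ = 0) : 0 ≤ p y := by
  by_contra hneg
  push_neg at hneg
  have hpc : ContinuousOn p (Set.Icc x₀ y) :=
    fun x hx => ((hp x hx).continuousAt).continuousWithinAt
  have hx₀y : x₀ < y := by
    rcases eq_or_lt_of_le hxy with h | h
    · exact absurd (h ▸ hp0) (by intro hh'; rw [hh'] at hneg; exact lt_irrefl 0 hneg)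
    · exact h
  obtain ⟨M, hM⟩ := isCompact_Icc.exists_bound_of_continuousOn hh
  have hMnn : 0 ≤ M := le_trans (norm_nonneg _) (hM x₀ ⟨le_refl _, hxy⟩)
  set Z : Set ℝ := Set.Icc x₀ y ∩ p ⁻¹' {0} with hZdef
  have hZclosed : IsClosed Z := hpc.preimage_isClosed_of_isClosed isClosed_Icc isClosed_singleton
  have hZcomp : IsCompact Z := isCompact_Icc.of_isClosed_subset hZclosed Set.inter_subset_left
  have hZne : Z.Nonempty := ⟨x₀, ⟨le_refl _, hxy⟩, hp0⟩
  set z := sSup Z with hz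
  have hzZ : z ∈ Z := hZcomp.sSup_mem hZne
  have hz0 : p z = 0 := hzZ.2
  have hzIcc : z ∈ Set.Icc x₀ y := hzZ.1
  have hzy : z < y := lt_of_le_of_ne hzIcc.2 (by
    intro hzy; rw [hzy] at hz0; rw [hz0] at hneg; exact lt_irrefl 0 hneg)
  -- p < 0 on (z, y]
  have hneg' : ∀ x ∈ Set.Ioc z y, p x < 0 := by
    intro x hx
    rcases lt_trichotomy (p x) 0 with h' | h' | h'
    · exact h'
    · exact absurd (le_csSup hZcomp.bddAbove
        (⟨⟨le_trans hzIcc.1 hx.1.le, hx.2⟩, h'⟩ : x ∈ Z)) (not_le.mpr hx.1)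
    · -- IVT between x and y gives a zero > z, contradiction
      have hxylt : x < y := lt_of_le_of_ne hx.2 (by
        rintro rfl; exact absurd h' (not_lt.mpr hneg.le))
      have hsub : Set.Icc x y ⊆ Set.Icc x₀ y :=
        Set.Icc_subset_Icc (le_trans hzIcc.1 hx.1.le) le_rfl
      have := intermediate_value_Icc' hxylt.le (hpc.mono hsub)
      obtain ⟨c, hc, hc0⟩ := this ⟨hneg.le, h'.le⟩
      have hcZ : c ∈ Z := ⟨hsub hc, hc0⟩
      exact absurd (le_csSup hZcomp.bddAbove hcZ) (not_le.mpr (lt_of_lt_of_le hx.1 hc.1))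
  -- G = exp(-(M*x)) * p x is monotone on [z, y]
  set G : ℝ → ℝ := fun x => Real.exp (-(M * x)) * p x with hGdef
  have hGderiv : ∀ x ∈ Set.Icc x₀ y,
      HasDerivAt G (Real.exp (-(M * x)) * (-M) * p x + Real.exp (-(M * x)) * p' x) x := by
    intro x hx
    have h1 : HasDerivAt (fun t : ℝ => Real.exp (-(M * t))) (Real.exp (-(M * x)) * (-M)) x := by
      have : HasDerivAt (fun t : ℝ => -(M * t)) (-M) x := by
        exact ((hasDerivAt_id x).const_mul M).neg.congr_deriv (by simp)
      exact this.exp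
    exact h1.mul (hp x hx)
  have hsubzy : Set.Icc z y ⊆ Set.Icc x₀ y := Set.Icc_subset_Icc hzIcc.1 le_rfl
  have hGmono : MonotoneOn G (Set.Icc z y) := by
    apply monotoneOn_of_deriv_nonneg (convex_Icc z y)
    · exact fun x hx => (hGderiv x (hsubzy hx)).continuousAt.continuousWithinAt
    · intro x hx
      rw [interior_Icc] at hx
      exact ((hGderiv x (hsubzy (Set.Ioo_subset_Icc_self hx))).differentiableAt).differentiableWithinAt
    · intro x hx
      rw [interior_Icc] at hx
      have hxIcc := hsubzy (Set.Ioo_subset_Icc_self hx)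
      rw [(hGderiv x hxIcc).deriv]
      have hpx : p x < 0 := hneg' x ⟨hx.1, hx.2.le⟩
      have hhx : -M ≤ h x := by
        have := hM x hxIcc
        rw [Real.norm_eq_abs] at this
        linarith [abs_le.mp this]
      have h2 : M * p x ≤ p' x := by
        have h3 := hineq x hxIcc
        nlinarith
      have hexp := Real.exp_pos (-(M * x))
      nlinarith
  have hGz : G z = 0 := by simp [hGdef, hz0]
  have hGy : G y < 0 := mul_neg_of_pos_of_neg (Real.exp_pos _) hneg
  have := hGmono ⟨le_refl z, hzy.le⟩ ⟨hzy.le, le_refl y⟩ hzy.le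
  rw [hGz] at this
  linarith

/-- Mirror version: if `p' + h·p ≥ 0` on `[y, x₀]` and `p x₀ = 0`, then `p y ≤ 0`. -/
lemma aux_left {x₀ y : ℝ} {p p' h : ℝ → ℝ} (hxy : y ≤ x₀)
    (hp : ∀ x ∈ Set.Icc y x₀, HasDerivAt p (p' x) x)
    (hh : ContinuousOn h (Set.Icc y x₀))
    (hineq : ∀ x ∈ Set.Icc y x₀, 0 ≤ p' x + h x * p x)
    (hp0 : p x₀ = 0) : p y ≤ 0 := by
  have key : 0 ≤ -p (-(-y)) := by
    apply aux_right (x₀ := -x₀) (y := -y) (p := fun t => -p (-t)) (p' := fun t => p' (-t))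
      (h := fun t => -h (-t)) (neg_le_neg hxy)
    · intro x hx
      have hx' : -x ∈ Set.Icc y x₀ := ⟨by linarith [hx.2], by linarith [hx.1]⟩
      have h1 : HasDerivAt (fun t : ℝ => p (-t)) (p' (-x) * (-1)) x :=
        (hp (-x) hx').comp x (hasDerivAt_neg x)
      exact h1.neg.congr_deriv (by simp)
    · have : ContinuousOn (fun t : ℝ => h (-t)) (Set.Icc (-x₀) (-y)) := by
        apply hh.comp continuousOn_neg
        intro x hx
        exact ⟨by linarith [hx.2], by linarith [hx.1]⟩
      exact this.neg
    · intro x hx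
      have hx' : -x ∈ Set.Icc y x₀ := ⟨by linarith [hx.2], by linarith [hx.1]⟩
      have := hineq (-x) hx'
      show 0 ≤ p' (-x) + -h (-x) * -p (-x)
      nlinarith
    · simp [hp0]
  simpa using key


/-- One-dimensional strong maximum principle for the transformed operator `Q`
of the relativistic heat equation (`c = 1`): if `V'' ≤ 0`, `Qw ≥ 0` on an open
interval `Ω` and `w` attains an interior maximum, then `w` is constant. -/
theorem strong_max_principle_Q_one_dim (V : ℝ → ℝ) (hV : ContDiff ℝ 2 V)
    (hV'' : ∀ x, deriv (deriv V) x ≤ 0)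
    (a b : ℝ) (w : ℝ → ℝ) (hw : ContDiffOn ℝ 2 w (Set.Ioo a b))
    (hQ : ∀ x ∈ Set.Ioo a b,
      0 ≤ deriv (deriv w) x / (1 + (deriv w x) ^ 2) ^ ((3 : ℝ) / 2) +
        (deriv w x) ^ 2 / Real.sqrt (1 + (deriv w x) ^ 2) +
        deriv w x * deriv V x / Real.sqrt (1 + (deriv V x) ^ 2) +
        deriv (deriv V) x / (1 + (deriv V x) ^ 2) ^ ((3 : ℝ) / 2))
    (x₀ : ℝ) (hx₀ : x₀ ∈ Set.Ioo a b)
    (hmax : ∀ x ∈ Set.Ioo a b, w x ≤ w x₀) :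
    ∀ x ∈ Set.Ioo a b, w x = w x₀ := by
  have hΩ : IsOpen (Set.Ioo a b) := isOpen_Ioo
  set p : ℝ → ℝ := deriv w with hpdef
  set s : ℝ → ℝ := fun x => deriv V x / Real.sqrt (1 + (deriv V x) ^ 2) with hsdef
  set h : ℝ → ℝ :=
    fun x => (p x / Real.sqrt (1 + (p x) ^ 2) + s x) * (1 + (p x) ^ 2) ^ ((3 : ℝ) / 2)
    with hhdef
  -- regularity facts
  have hC1 : ContDiffOn ℝ 1 p (Set.Ioo a b) := by
    have := hw.deriv_of_isOpen hΩ (n := 2) (m := 1) (by norm_num)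
    exact this
  have hp_hasderiv : ∀ x ∈ Set.Ioo a b, HasDerivAt p (deriv p x) x := by
    intro x hx
    have : DifferentiableAt ℝ p x :=
      ((hC1.differentiableOn one_ne_zero) x hx).differentiableAt (hΩ.mem_nhds hx)
    exact this.hasDerivAt
  have hw_hasderiv : ∀ x ∈ Set.Ioo a b, HasDerivAt w (p x) x := by
    intro x hx
    have : DifferentiableAt ℝ w x :=
      ((hw.differentiableOn (by norm_num)) x hx).differentiableAt (hΩ.mem_nhds hx)
    exact this.hasDerivAt
  have hp_cont : ContinuousOn p (Set.Ioo a b) := hC1.continuousOn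
  have hsqrt_pos : ∀ t : ℝ, 0 < Real.sqrt (1 + t ^ 2) := by
    intro t; exact Real.sqrt_pos.mpr (by positivity)
  have hs_cont : Continuous s := by
    have hdV : Continuous (deriv V) := hV.continuous_deriv (by norm_num)
    apply hdV.div ((continuous_const.add (hdV.pow 2)).sqrt)
    intro x; exact (hsqrt_pos (deriv V x)).ne'
  have hh_cont : ContinuousOn h (Set.Ioo a b) := by
    apply ContinuousOn.mul
    · apply ContinuousOn.add
      · apply hp_cont.div ((continuousOn_const.add (hp_cont.pow 2)).sqrt)
        intro x _; exact (hsqrt_pos (p x)).ne'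
      · exact hs_cont.continuousOn
    · exact (continuousOn_const.add (hp_cont.pow 2)).rpow_const
        (fun x _ => Or.inr (by norm_num))
  -- the key differential inequality
  have hkey : ∀ x ∈ Set.Ioo a b, 0 ≤ deriv p x + h x * p x := by
    intro x hx
    have hq := hQ x hx
    set P := p x
    set P' := deriv p x
    set D := deriv V x
    set D2 := deriv (deriv V) x
    have hT : (0:ℝ) < (1 + P ^ 2) ^ ((3:ℝ)/2) := Real.rpow_pos_of_pos (by positivity) _
    have hTV : (0:ℝ) < (1 + D ^ 2) ^ ((3:ℝ)/2) := Real.rpow_pos_of_pos (by positivity) _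
    have hD2 : D2 / (1 + D ^ 2) ^ ((3:ℝ)/2) ≤ 0 := div_nonpos_of_nonpos_of_nonneg (hV'' x) hTV.le
    have hS : 0 ≤ P' / (1 + P ^ 2) ^ ((3:ℝ)/2) + P ^ 2 / Real.sqrt (1 + P ^ 2)
        + P * D / Real.sqrt (1 + D ^ 2) := by linarith
    have hmul : 0 ≤ (1 + P ^ 2) ^ ((3:ℝ)/2) *
        (P' / (1 + P ^ 2) ^ ((3:ℝ)/2) + P ^ 2 / Real.sqrt (1 + P ^ 2)
          + P * D / Real.sqrt (1 + D ^ 2)) := mul_nonneg hT.le hS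
    have hcancel : P' / (1 + P ^ 2) ^ ((3:ℝ)/2) * (1 + P ^ 2) ^ ((3:ℝ)/2) = P' :=
      div_mul_cancel₀ _ hT.ne'
    have hexpand : (1 + P ^ 2) ^ ((3:ℝ)/2) *
        (P' / (1 + P ^ 2) ^ ((3:ℝ)/2) + P ^ 2 / Real.sqrt (1 + P ^ 2)
          + P * D / Real.sqrt (1 + D ^ 2))
        = P' / (1 + P ^ 2) ^ ((3:ℝ)/2) * (1 + P ^ 2) ^ ((3:ℝ)/2)
          + (P / Real.sqrt (1 + P ^ 2) + D / Real.sqrt (1 + D ^ 2))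
            * (1 + P ^ 2) ^ ((3:ℝ)/2) * P := by ring
    rw [hexpand, hcancel] at hmul
    show 0 ≤ P' + (P / Real.sqrt (1 + P ^ 2) + D / Real.sqrt (1 + D ^ 2))
      * (1 + P ^ 2) ^ ((3:ℝ)/2) * P
    linarith
  -- p x₀ = 0
  have hp0 : p x₀ = 0 := by
    apply IsLocalMax.deriv_eq_zero
    filter_upwards [hΩ.mem_nhds hx₀] with y hy using hmax y hy
  -- p ≥ 0 to the right of x₀
  have hright : ∀ x ∈ Set.Ioo a b, x₀ ≤ x → 0 ≤ p x := by
    intro y hy hxy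
    have hsub : Set.Icc x₀ y ⊆ Set.Ioo a b := fun t ht =>
      ⟨lt_of_lt_of_le hx₀.1 ht.1, lt_of_le_of_lt ht.2 hy.2⟩
    exact aux_right hxy (fun x hx => hp_hasderiv x (hsub hx)) (hh_cont.mono hsub)
      (fun x hx => hkey x (hsub hx)) hp0
  -- p ≤ 0 to the left of x₀
  have hleft : ∀ x ∈ Set.Ioo a b, x ≤ x₀ → p x ≤ 0 := by
    intro y hy hxy
    have hsub : Set.Icc y x₀ ⊆ Set.Ioo a b := fun t ht =>
      ⟨lt_of_lt_of_le hy.1 ht.1, lt_of_le_of_lt ht.2 hx₀.2⟩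
    exact aux_left hxy (fun x hx => hp_hasderiv x (hsub hx)) (hh_cont.mono hsub)
      (fun x hx => hkey x (hsub hx)) hp0
  -- conclusion
  intro x hx
  rcases le_total x₀ x with hc | hc
  · have hsub : Set.Icc x₀ x ⊆ Set.Ioo a b := fun t ht =>
      ⟨lt_of_lt_of_le hx₀.1 ht.1, lt_of_le_of_lt ht.2 hx.2⟩
    have hmono : MonotoneOn w (Set.Icc x₀ x) := by
      apply monotoneOn_of_deriv_nonneg (convex_Icc x₀ x)
        (hw.continuousOn.mono hsub)
      · intro t ht
        rw [interior_Icc] at ht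
        exact ((hw_hasderiv t (hsub (Set.Ioo_subset_Icc_self ht))).differentiableAt).differentiableWithinAt
      · intro t ht
        rw [interior_Icc] at ht
        exact hright t (hsub (Set.Ioo_subset_Icc_self ht)) ht.1.le
    exact le_antisymm (hmax x hx) (hmono ⟨le_refl x₀, hc⟩ ⟨hc, le_refl x⟩ hc)
  · have hsub : Set.Icc x x₀ ⊆ Set.Ioo a b := fun t ht =>
      ⟨lt_of_lt_of_le hx.1 ht.1, lt_of_le_of_lt ht.2 hx₀.2⟩
    have hanti : AntitoneOn w (Set.Icc x x₀) := by
      apply antitoneOn_of_deriv_nonpos (convex_Icc x x₀)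
        (hw.continuousOn.mono hsub)
      · intro t ht
        rw [interior_Icc] at ht
        exact ((hw_hasderiv t (hsub (Set.Ioo_subset_Icc_self ht))).differentiableAt).differentiableWithinAt
      · intro t ht
        rw [interior_Icc] at ht
        exact hleft t (hsub (Set.Ioo_subset_Icc_self ht)) ht.2.le
    exact le_antisymm (hmax x hx) (hanti ⟨le_refl x, hc⟩ ⟨hc, le_refl x₀⟩ hc)
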